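/- Let H be a real Hilbert space and let T be a densely defined unbounded operator on H that is selfadjoint (equal to its adjoint as an unbounded operator). Assume T is Fredholm, i.e., the kernel of T is finite-dimensional and the range of T is closed in H. Then 0 is not an accumulation point of the spectrum of T: there exists ε > 0 such that for every real number μ with 0 < |μ| < ε, the operator μ·id − T, regarded as a map from the domain of T to H, is bijective. -/

import Mathlib

open RealInnerProductSpace


/-- If `T` is a densely defined selfadjoint unbounded operator on a real
Hilbert space `H` which is Fredholm (finite-dimensional kernel and closed range), then `0` is
not an accumulation point of the spectrum of `T`: there is `ε > 0` such that for all real `μ`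
with `0 < |μ| < ε`, the operator `μ • id - T : T.domain → H` is bijective. -/
theorem stmt0 {H : Type*} [NormedAddCommGroup H] [InnerProductSpace ℝ H] [CompleteSpace H]
    (T : H →ₗ.[ℝ] H) (hdense : Dense (T.domain : Set H))
    (hsa : T.adjoint = T)
    (hker : FiniteDimensional ℝ (LinearMap.ker T.toFun))
    (hran : IsClosed (LinearMap.range T.toFun : Set H)) :
    ∃ ε > (0 : ℝ), ∀ μ : ℝ, 0 < |μ| → |μ| < ε →
      Function.Bijective (fun x : T.domain => μ • (x : H) - T x) := by
  classical
  obtain ⟨hdom, happ⟩ := LinearPMap.ext_iff.mp hsa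
  -- symmetry
  have hsymm : ∀ x y : T.domain, ⟪T x, (y : H)⟫ = ⟪(x : H), T y⟫ := by
    have h := LinearPMap.adjoint_isFormalAdjoint hdense
    rw [hsa] at h
    exact fun x y => h x y
  -- the kernel as a submodule of H
  set K : Submodule ℝ H := (LinearMap.ker T.toFun).map T.domain.subtype with hKdef
  have hKmem : ∀ y : H, y ∈ K ↔ ∃ hy : y ∈ T.domain, T ⟨y, hy⟩ = 0 := by
    intro y
    constructor
    · rintro ⟨⟨x, hx⟩, hker, rfl⟩
      exact ⟨hx, hker⟩
    · rintro ⟨hy, h0⟩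
      exact ⟨⟨y, hy⟩, h0, rfl⟩
  have hKfin : FiniteDimensional ℝ K := Module.Finite.map _ _
  haveI : CompleteSpace K := FiniteDimensional.complete ℝ K
  -- closedness of T (from selfadjointness)
  have hclosed : ∀ (u : ℕ → T.domain) (x y : H),
      Filter.Tendsto (fun n => ((u n : H))) Filter.atTop (nhds x) →
      Filter.Tendsto (fun n => T (u n)) Filter.atTop (nhds y) →
      ∃ hx : x ∈ T.domain, T ⟨x, hx⟩ = y := by
    intro u x y hux huy
    have hz : ∀ z : T.domain, ⟪y, (z : H)⟫ = ⟪x, T z⟫ := by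
      intro z
      have h1 : Filter.Tendsto (fun n => ⟪T (u n), (z : H)⟫) Filter.atTop (nhds ⟪y, (z:H)⟫) :=
        (Continuous.inner continuous_id continuous_const).continuousAt.tendsto.comp huy
      have h2 : Filter.Tendsto (fun n => ⟪(u n : H), T z⟫) Filter.atTop (nhds ⟪x, T z⟫) :=
        (Continuous.inner continuous_id continuous_const).continuousAt.tendsto.comp hux
      have he : (fun n => ⟪T (u n), (z : H)⟫) = fun n => ⟪(u n : H), T z⟫ := by
        funext n; exact hsymm (u n) z
      rw [he] at h1
      exact tendsto_nhds_unique h1 h2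
    have hx : x ∈ T.adjoint.domain :=
      LinearPMap.mem_adjoint_domain_of_exists _ ⟨y, fun z => hz z⟩
    have hx' : x ∈ T.domain := hdom ▸ hx
    have hval : T.adjoint ⟨x, hx⟩ = y :=
      LinearPMap.adjoint_apply_eq hdense ⟨x, hx⟩ (fun z => hz z)
    exact ⟨hx', ((happ (hf := hx) (hg := hx')).symm.trans hval)⟩
  -- range equals Kᗮ
  haveI : CompleteSpace (LinearMap.range T.toFun : Submodule ℝ H) :=
    hran.completeSpace_coe
  have hRan : (LinearMap.range T.toFun : Submodule ℝ H) = Kᗮ := by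
    apply le_antisymm
    · rintro y ⟨x, rfl⟩
      rw [Submodule.mem_orthogonal]
      intro z hz
      obtain ⟨hz1, hz2⟩ := (hKmem z).mp hz
      have := hsymm x ⟨z, hz1⟩
      rw [hz2, inner_zero_right] at this
      rw [real_inner_comm]
      exact this
    · have h1 : (LinearMap.range T.toFun : Submodule ℝ H)ᗮ ≤ K := by
        intro z hz
        rw [Submodule.mem_orthogonal] at hz
        have hz' : ∀ x : T.domain, ⟪(0:H), (x:H)⟫ = ⟪z, T x⟫ := by
          intro x
          rw [inner_zero_left, real_inner_comm]
          exact (hz (T x) (LinearMap.mem_range_self _ x)).symm ▸ rfl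
        have hx : z ∈ T.adjoint.domain :=
          LinearPMap.mem_adjoint_domain_of_exists _ ⟨0, hz'⟩
        have hx' : z ∈ T.domain := hdom ▸ hx
        have hval : T.adjoint ⟨z, hx⟩ = 0 :=
          LinearPMap.adjoint_apply_eq hdense ⟨z, hx⟩ hz'
        exact (hKmem z).mpr ⟨hx', (happ (hf := hx) (hg := hx')).symm.trans hval⟩
      calc Kᗮ ≤ (LinearMap.range T.toFun : Submodule ℝ H)ᗮᗮ := Submodule.orthogonal_le h1
        _ = LinearMap.range T.toFun := Submodule.orthogonal_orthogonal _
  -- the projection onto Kᗮ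
  set PR : H →L[ℝ] H := Kᗮ.subtypeL.comp (Kᗮ.orthogonalProjectionOnto) with hPRdef
  have hPRmem : ∀ y : H, PR y ∈ Kᗮ := fun y => (Kᗮ.orthogonalProjectionOnto y).2
  have hPRK : ∀ y : H, y - PR y ∈ K := by
    intro y
    have h : y - PR y ∈ Kᗮᗮ := Submodule.sub_starProjection_mem_orthogonal (K := Kᗮ) y
    rwa [Submodule.orthogonal_orthogonal K] at h
  have hPRid : ∀ y ∈ Kᗮ, PR y = y := by
    intro y hy
    have := Submodule.orthogonalProjectionOnto_mem_subspace_eq_self (K := Kᗮ) ⟨y, hy⟩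
    simp only [hPRdef, ContinuousLinearMap.comp_apply, Submodule.subtypeL_apply]
    rw [this]
  -- membership of K in domain
  have hKd : ∀ {y : H}, y ∈ K → y ∈ T.domain := fun h => ((hKmem _).mp h).1
  have hKz : ∀ (y : H) (h : y ∈ K), T ⟨y, hKd h⟩ = 0 := fun y h => ((hKmem _).mp h).2
  -- uniqueness
  have huniq : ∀ u v : T.domain, (u : H) ∈ Kᗮ → (v : H) ∈ Kᗮ → T u = T v → u = v := by
    intro u v hu hv huv
    have hm : ((u - v : T.domain) : H) ∈ K := by
      refine (hKmem _).mpr ⟨(u - v).2, ?_⟩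
      rw [show (⟨((u - v : T.domain) : H), (u - v).2⟩ : T.domain) = u - v from rfl,
        T.map_sub, huv, sub_self]
    have hm' : ((u - v : T.domain) : H) ∈ Kᗮ := by
      rw [Submodule.coe_sub]
      exact sub_mem hu hv
    have h0 : ((u - v : T.domain) : H) = 0 := by
      have := (Submodule.mem_bot (R := ℝ)).mp
        ((K.orthogonal_disjoint.eq_bot ▸ Submodule.mem_inf.mpr ⟨hm, hm'⟩ : _))
      exact this
    have : u - v = 0 := Subtype.ext h0
    exact sub_eq_zero.mp this
  -- preimages
  have hpre : ∀ y : H, ∃ x : T.domain, T x = PR y ∧ (x : H) ∈ Kᗮ := by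
    intro y
    have hy : PR y ∈ LinearMap.range T.toFun := by rw [hRan]; exact hPRmem y
    obtain ⟨x', hx'⟩ := hy
    have hk : (x' : H) - PR (x' : H) ∈ K := hPRK _
    refine ⟨x' - ⟨_, hKd hk⟩, ?_, ?_⟩
    · rw [T.map_sub, hKz _ hk, sub_zero]
      exact hx'
    · show ((x' : H) - ((x' : H) - PR (x' : H))) ∈ Kᗮ
      rw [sub_sub_cancel]
      exact hPRmem _
  choose f hf1 hf2 using hpre
  -- the (bounded) pseudo-inverse
  set β₀ : H →ₗ[ℝ] H :=
    { toFun := fun y => (f y : H)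
      map_add' := by
        intro a b
        have h : f (a + b) = f a + f b := by
          refine huniq _ _ (hf2 _) ?_ ?_
          · rw [Submodule.coe_add]; exact add_mem (hf2 a) (hf2 b)
          · rw [T.map_add, hf1, hf1, hf1, map_add]
        show ((f (a + b) : H)) = (f a : H) + (f b : H)
        rw [h, Submodule.coe_add]
      map_smul' := by
        intro c a
        have h : f (c • a) = c • f a := by
          refine huniq _ _ (hf2 _) ?_ ?_
          · rw [Submodule.coe_smul]; exact Submodule.smul_mem _ _ (hf2 a)
          · rw [T.map_smul, hf1, hf1, map_smul]
        show ((f (c • a) : H)) = c • (f a : H)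
        rw [h, Submodule.coe_smul] } with hβ₀def
  have hβ₀ : ∀ y : H, β₀ y = (f y : H) := fun y => rfl
  have hcont : Continuous β₀ := by
    refine β₀.continuous_of_seq_closed_graph ?_
    intro u x y hux huy
    have h1 : Filter.Tendsto (fun n => ((f (u n) : H))) Filter.atTop (nhds y) := huy
    have h2 : Filter.Tendsto (fun n => T (f (u n))) Filter.atTop (nhds (PR x)) := by
      have : (fun n => T (f (u n))) = fun n => PR (u n) := by
        funext n; exact hf1 (u n)
      rw [this]
      exact (PR.continuous.tendsto _).comp hux
    obtain ⟨hy, hvy⟩ := hclosed (fun n => f (u n)) y (PR x) h1 h2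
    have hyK : y ∈ Kᗮ :=
      K.isClosed_orthogonal.mem_of_tendsto h1 (Filter.Eventually.of_forall fun n => hf2 (u n))
    have : f x = ⟨y, hy⟩ := by
      refine huniq _ _ (hf2 _) hyK ?_
      rw [hf1, hvy]
    rw [hβ₀, this]
  set β : H →L[ℝ] H := ⟨β₀, hcont⟩ with hβdef
  set G : H →L[ℝ] H := β.comp PR with hGdef
  have hG : ∀ y : H, G y = (f y : H) := by
    intro y
    show (f (PR y) : H) = (f y : H)
    congr 1
    refine huniq _ _ (hf2 _) (hf2 _) ?_
    rw [hf1, hf1, hPRid _ (hPRmem y)]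
  have hTmem : ∀ x : T.domain, T x ∈ Kᗮ := by
    intro x
    rw [← hRan]
    exact LinearMap.mem_range_self _ x
  have hbound : ∀ x : T.domain, (x : H) ∈ Kᗮ → ‖(x : H)‖ ≤ ‖G‖ * ‖T x‖ := by
    intro x hx
    have hfx : f (T x) = x := by
      refine huniq _ _ (hf2 _) hx ?_
      rw [hf1, hPRid _ (hTmem x)]
    calc ‖(x : H)‖ = ‖G (T x)‖ := by rw [hG, hfx]
      _ ≤ ‖G‖ * ‖T x‖ := G.le_opNorm _
  refine ⟨1 / (‖G‖ + 1), by positivity, ?_⟩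
  intro μ hμ0 hμε
  have hμ : μ ≠ 0 := by
    intro h; rw [h, abs_zero] at hμ0; exact lt_irrefl 0 hμ0
  have hμC : |μ| * ‖G‖ < 1 := by
    have h1 : |μ| * (‖G‖ + 1) < 1 := by
      rw [lt_div_iff₀ (by positivity : (0:ℝ) < ‖G‖ + 1)] at hμε
      exact hμε
    calc |μ| * ‖G‖ ≤ |μ| * (‖G‖ + 1) := by nlinarith [abs_nonneg μ, norm_nonneg G]
      _ < 1 := h1
  constructor
  · -- injectivity
    intro a b hab
    simp only at hab
    set d : T.domain := a - b with hd
    have hTd : T d = μ • (d : H) := by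
      rw [hd, T.map_sub, Submodule.coe_sub, smul_sub]
      exact (sub_eq_sub_iff_sub_eq_sub.mp hab).symm
    -- d is orthogonal to K
    set k : H := (d : H) - PR (d : H) with hk
    have hkK : k ∈ K := hPRK _
    have hdk : ⟪(d : H), k⟫ = 0 := by
      have h1 : ⟪T d, k⟫ = 0 :=
        Submodule.inner_left_of_mem_orthogonal hkK (hTmem d)
      rw [hTd, real_inner_smul_left] at h1
      exact (mul_eq_zero.mp h1).resolve_left hμ
    have hk0 : k = 0 := by
      have h2 : ⟪PR (d : H), k⟫ = 0 :=
        Submodule.inner_left_of_mem_orthogonal hkK (hPRmem _)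
      have h3 : ⟪k, k⟫ = 0 := by
        have : (d : H) = k + PR (d : H) := by rw [hk]; abel
        rw [this, inner_add_left, h2, add_zero] at hdk
        exact hdk
      exact inner_self_eq_zero.mp h3
    have hdmem : (d : H) ∈ Kᗮ := by
      have : (d : H) = PR (d : H) := by
        have := sub_eq_zero.mp (hk ▸ hk0)
        exact this
      rw [this]; exact hPRmem _
    have hb := hbound d hdmem
    rw [hTd, norm_smul, Real.norm_eq_abs] at hb
    have hd0 : (d : H) = 0 := by
      by_contra hne
      have hpos : 0 < ‖(d : H)‖ := norm_pos_iff.mpr hne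
      nlinarith
    have : d = 0 := Subtype.ext hd0
    rw [hd] at this
    exact sub_eq_zero.mp this
  · -- surjectivity
    intro y
    have hnorm' : ‖μ • G‖ ≤ ‖μ‖ * ‖G‖ := norm_smul_le μ G
    have hnorm : ‖μ • G‖ < 1 :=
      lt_of_le_of_lt hnorm' (by rw [Real.norm_eq_abs]; exact hμC)
    set u : (H →L[ℝ] H)ˣ := Units.oneSub (μ • G) hnorm with hu
    set w : H := ((↑u⁻¹ : H →L[ℝ] H)) (PR y) with hwdef
    have hw : w - μ • G w = PR y := by
      have h1 : (↑u * ↑u⁻¹ : H →L[ℝ] H) = 1 := u.mul_inv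
      have h2 := congrArg (fun A : H →L[ℝ] H => A (PR y)) h1
      simp only [ContinuousLinearMap.mul_apply, ContinuousLinearMap.one_apply] at h2
      have h3 : (↑u : H →L[ℝ] H) = 1 - μ • G := rfl
      rw [h3] at h2
      simpa [ContinuousLinearMap.sub_apply, ContinuousLinearMap.smul_apply] using h2
    have hwmem : w ∈ Kᗮ := by
      have : w = PR y + μ • G w := by rw [← hw]; abel
      rw [this]
      exact add_mem (hPRmem y) (Submodule.smul_mem _ _ (hG w ▸ hf2 w))
    set z : H := -w with hz
    have hzmem : z ∈ Kᗮ := neg_mem hwmem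
    set x₁ : T.domain := f z with hx₁
    have hTx₁ : T x₁ = z := by rw [hx₁, hf1, hPRid _ hzmem]
    have hmain : μ • (x₁ : H) - T x₁ = PR y := by
      rw [hTx₁]
      have : (x₁ : H) = G z := (hG z).symm
      rw [this, hz, map_neg, smul_neg, sub_neg_eq_add, neg_add_eq_sub]
      exact hw
    have hkK : y - PR y ∈ K := hPRK y
    refine ⟨x₁ + μ⁻¹ • ⟨y - PR y, hKd hkK⟩, ?_⟩
    simp only
    rw [T.map_add, T.map_smul, hKz _ hkK, smul_zero, add_zero, Submodule.coe_add,
      Submodule.coe_smul, smul_add]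
    have hcoe : ((⟨y - PR y, hKd hkK⟩ : T.domain) : H) = y - PR y := rfl
    rw [hcoe, smul_smul, mul_inv_cancel₀ hμ, one_smul, add_sub_right_comm, hmain]
    abel
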